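/- Let x₀ ∈ ℝ and z, z₂ ∈ ℂ satisfy x₀² + 2|z₂|² = 1 and |z|² = 1/2, and set λ := √(2x₀² + |z₂|²). Then for all α₀, δ₀ ∈ ℂ with |α₀| ≤ √2 and |δ₀| < 1, one has 4x₀² + 4λ²|z₂|² + 4|z₂|² + 8λ²x₀² − 8·Re(z₂²·conj(z)²) − 2√2·x₀·(2λ² − 1)·Re(i·α₀·z₂) + 4·Re(δ₀·(−2x₀²·conj(z)² + λ²·conj(z₂)²)) > 0. -/

import Mathlib

open Complex

set_option maxHeartbeats 1000000 in
/-- The key transversality inequality for the developing map of the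
`(G₂', Ein^{2,3})`-structures associated to stable β-cyclic Higgs bundles. -/
theorem ein_transversality
    (x₀ : ℝ) (z z₂ : ℂ)
    (hnorm : x₀ ^ 2 + 2 * ‖z₂‖ ^ 2 = 1)
    (hz : ‖z‖ ^ 2 = 1 / 2)
    (α₀ δ₀ : ℂ)
    (hα : ‖α₀‖ ≤ Real.sqrt 2) (hδ : ‖δ₀‖ < 1) :
    0 < 4 * x₀ ^ 2
        + 4 * Real.sqrt (2 * x₀ ^ 2 + ‖z₂‖ ^ 2) ^ 2 * ‖z₂‖ ^ 2
        + 4 * ‖z₂‖ ^ 2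
        + 8 * Real.sqrt (2 * x₀ ^ 2 + ‖z₂‖ ^ 2) ^ 2 * x₀ ^ 2
        - 8 * (z₂ ^ 2 * (starRingEnd ℂ z) ^ 2).re
        - 2 * Real.sqrt 2 * x₀ * (2 * Real.sqrt (2 * x₀ ^ 2 + ‖z₂‖ ^ 2) ^ 2 - 1)
            * (Complex.I * α₀ * z₂).re
        + 4 * (δ₀ * (-2 * (x₀ : ℂ) ^ 2 * (starRingEnd ℂ z) ^ 2
            + (Real.sqrt (2 * x₀ ^ 2 + ‖z₂‖ ^ 2) : ℂ) ^ 2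
              * (starRingEnd ℂ z₂) ^ 2)).re := by
  set a : ℝ := ‖z₂‖ ^ 2 with ha
  set s : ℝ := x₀ ^ 2 with hsdef
  have ha0 : 0 ≤ a := by positivity
  have hs0 : 0 ≤ s := sq_nonneg _
  have ha12 : a ≤ 1 / 2 := by nlinarith
  have hL : Real.sqrt (2 * x₀ ^ 2 + a) ^ 2 = 2 * s + a :=
    Real.sq_sqrt (by positivity)
  have hLC : ((Real.sqrt (2 * x₀ ^ 2 + a) : ℝ) : ℂ) ^ 2 = ((2 * s + a : ℝ) : ℂ) := by
    rw [← Complex.ofReal_pow, hL]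
  rw [hL, hLC]
  have habs2 : ‖z₂‖ = Real.sqrt a := (Real.sqrt_sq (norm_nonneg _)).symm
  have habsx : |x₀| = Real.sqrt s := (Real.sqrt_sq_eq_abs x₀).symm
  -- bound 1 : the z₂² conj(z)² term
  have h1 : (z₂ ^ 2 * (starRingEnd ℂ z) ^ 2).re ≤ a * (1 / 2) := by
    have h := Complex.re_le_norm (z₂ ^ 2 * (starRingEnd ℂ z) ^ 2)
    rw [norm_mul, norm_pow, norm_pow, Complex.norm_conj] at h
    rw [ha, ← hz]; exact h
  -- bound 2 : the α₀ term
  have h2 : |(Complex.I * α₀ * z₂).re| ≤ Real.sqrt 2 * Real.sqrt a := by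
    calc |(Complex.I * α₀ * z₂).re| ≤ ‖Complex.I * α₀ * z₂‖ :=
          Complex.abs_re_le_norm _
      _ = ‖α₀‖ * ‖z₂‖ := by
          rw [norm_mul, norm_mul, Complex.norm_I, one_mul]
      _ ≤ Real.sqrt 2 * Real.sqrt a := by
          rw [habs2]
          exact mul_le_mul_of_nonneg_right hα (Real.sqrt_nonneg _)
  -- the coefficient of the α₀ term
  have hcoef : 2 * (2 * s + a) - 1 = 3 * s := by nlinarith
  rw [hcoef]
  have hsqrt2 : Real.sqrt 2 * Real.sqrt 2 = 2 := Real.mul_self_sqrt (by norm_num)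
  have h2' : 2 * Real.sqrt 2 * x₀ * (3 * s) * (Complex.I * α₀ * z₂).re
      ≤ 12 * s * Real.sqrt s * Real.sqrt a := by
    have hb : |2 * Real.sqrt 2 * x₀ * (3 * s) * (Complex.I * α₀ * z₂).re|
        ≤ 12 * s * Real.sqrt s * Real.sqrt a := by
      rw [abs_mul, abs_mul, abs_mul, abs_mul]
      have hs2 : |Real.sqrt 2| = Real.sqrt 2 := _root_.abs_of_nonneg (Real.sqrt_nonneg _)
      have h3s : |3 * s| = 3 * s := _root_.abs_of_nonneg (by positivity)
      have h2a : |(2:ℝ)| = 2 := by norm_num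
      rw [hs2, h3s, habsx, h2a]
      have hle : |(Complex.I * α₀ * z₂).re| ≤ Real.sqrt 2 * Real.sqrt a := h2
      have h0 : (0:ℝ) ≤ 2 * Real.sqrt 2 * Real.sqrt s * (3 * s) := by positivity
      calc 2 * Real.sqrt 2 * Real.sqrt s * (3 * s) * |(Complex.I * α₀ * z₂).re|
          ≤ 2 * Real.sqrt 2 * Real.sqrt s * (3 * s) * (Real.sqrt 2 * Real.sqrt a) :=
            mul_le_mul_of_nonneg_left hle h0
        _ = 12 * s * Real.sqrt s * Real.sqrt a := by
            linear_combination 6 * s * Real.sqrt s * Real.sqrt a * hsqrt2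
    exact le_trans (le_abs_self _) hb
  -- bound 3 : the δ₀ term
  have hM : (0:ℝ) < s + (2 * s + a) * a := by nlinarith
  have h3 : -(s + (2 * s + a) * a) <
      (δ₀ * (-2 * (x₀ : ℂ) ^ 2 * (starRingEnd ℂ z) ^ 2
        + ((2 * s + a : ℝ) : ℂ) * (starRingEnd ℂ z₂) ^ 2)).re := by
    set W : ℂ := -2 * (x₀ : ℂ) ^ 2 * (starRingEnd ℂ z) ^ 2
        + ((2 * s + a : ℝ) : ℂ) * (starRingEnd ℂ z₂) ^ 2 with hWdef
    have hWabs : ‖W‖ ≤ s + (2 * s + a) * a := by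
      have e1 : ‖-2 * (x₀ : ℂ) ^ 2 * (starRingEnd ℂ z) ^ 2‖
          = 2 * s * ‖z‖ ^ 2 := by
        rw [norm_mul, norm_pow, Complex.norm_conj]
        rw [show (-2 * (x₀ : ℂ) ^ 2) = (((-2 * x₀ ^ 2 : ℝ)) : ℂ) by push_cast; ring]
        rw [Complex.norm_real, Real.norm_eq_abs, hsdef]
        rw [_root_.abs_of_nonpos (by nlinarith [sq_nonneg x₀])]
        ring
      have e2 : ‖((2 * s + a : ℝ) : ℂ) * (starRingEnd ℂ z₂) ^ 2‖
          = (2 * s + a) * a := by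
        rw [norm_mul, norm_pow, Complex.norm_conj, Complex.norm_real, Real.norm_eq_abs,
          _root_.abs_of_nonneg (by positivity : (0:ℝ) ≤ 2 * s + a), ha]
      calc ‖W‖ ≤ ‖-2 * (x₀ : ℂ) ^ 2 * (starRingEnd ℂ z) ^ 2‖
            + ‖((2 * s + a : ℝ) : ℂ) * (starRingEnd ℂ z₂) ^ 2‖ :=
          norm_add_le _ _
        _ = s + (2 * s + a) * a := by rw [e1, e2, hz]; ring
    have hre : -(‖δ₀‖ * ‖W‖) ≤ (δ₀ * W).re := by
      have := Complex.abs_re_le_norm (δ₀ * W)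
      rw [norm_mul] at this
      linarith [neg_abs_le (δ₀ * W).re, abs_nonneg (δ₀ * W).re]
    have hstep : ‖δ₀‖ * ‖W‖ < s + (2 * s + a) * a := by
      rcases eq_or_lt_of_le (norm_nonneg W) with hW0 | hW0
      · rw [← hW0, mul_zero]; exact hM
      · calc ‖δ₀‖ * ‖W‖ < 1 * ‖W‖ :=
            mul_lt_mul_of_pos_right hδ hW0
          _ = ‖W‖ := one_mul _
          _ ≤ s + (2 * s + a) * a := hWabs
    linarith
  -- the key algebraic inequality : 8(2s+a)s ≥ 12 s √s √a
  have hkey : 12 * s * Real.sqrt s * Real.sqrt a ≤ 8 * (2 * s + a) * s := by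
    have hts : Real.sqrt s ^ 2 = s := Real.sq_sqrt hs0
    have htb : Real.sqrt a ^ 2 = a := Real.sq_sqrt ha0
    have h46 : (0:ℝ) ≤ 4 - 6 * a := by linarith
    have hs_eq : s = 1 - 2 * a := by linarith
    have hq : 9 * (s * a) ≤ (4 - 6 * a) ^ 2 := by
      have hsa' : s * a = a - 2 * a ^ 2 := by rw [hs_eq]; ring
      rw [hsa']
      nlinarith [sq_nonneg (108 * a - 57)]
    have hsa : 3 * (Real.sqrt s * Real.sqrt a) ≤ 4 - 6 * a := by
      have h' := Real.sqrt_le_sqrt hq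
      rwa [show 9 * (s * a) = (3 * (Real.sqrt s * Real.sqrt a)) ^ 2 by
          rw [mul_pow, mul_pow, hts, htb]; ring,
        Real.sqrt_sq (by positivity), Real.sqrt_sq h46] at h'
    have h4 := mul_le_mul_of_nonneg_left hsa (by positivity : (0:ℝ) ≤ 4 * s)
    calc 12 * s * Real.sqrt s * Real.sqrt a
        = 4 * s * (3 * (Real.sqrt s * Real.sqrt a)) := by ring
      _ ≤ 4 * s * (4 - 6 * a) := h4
      _ = 8 * (2 * s + a) * s := by linear_combination (-16 * s) * hnorm
  linarith [h1, h2', h3, hkey]
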